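/- arXiv:1305.0058 — 4 statements merged into one kernel-verified Lean document; each statement's English description precedes it below -/
import Mathlib

section
/- Let R be a ring, P an R-module with submodules A, B satisfying A ∩ B = 0, and set T = P/(A+B), M = P/A. If Hom(T, M) = 0 and Ext¹(T, P) = 0, then the canonical epimorphism P → M splits, so M is isomorphic to a direct summand of P. If moreover P is projective, then M is projective. -/
open CategoryTheory Opposite

/-- The first Ext group of two `R`-modules. -/
noncomputable abbrev Ext1 (R : Type) [Ring R] (T M : Type) [AddCommGroup T] [Module R T]
    [AddCommGroup M] [Module R M] :=
  ((Ext ℤ (ModuleCat R) 1).obj (op (ModuleCat.of R T))).obj (ModuleCat.of R M)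

lemma key (R : Type) [Ring R] (M P T : Type) [AddCommGroup M] [Module R M]
    [AddCommGroup P] [Module R P] [AddCommGroup T] [Module R T]
    (q : M →ₗ[R] T) (hq : Function.Surjective q)
    (hext : Subsingleton (Ext1 R T P)) (b : LinearMap.ker q →ₗ[R] P) :
    ∃ h : M →ₗ[R] P, ∀ x : LinearMap.ker q, h x = b x := by
  classical
  set TT := ModuleCat.of R T with hTT
  let F : ProjectiveResolution TT := ProjectiveResolution.of TT
  let sT := HomologicalComplex.singleObjXSelf (ComplexShape.down ℕ) 0 TT
  let ε : F.complex.X 0 ⟶ TT := F.π.f 0 ≫ sT.hom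
  have hsT : Function.Injective sT.hom := by
    exact (ModuleCat.mono_iff_injective sT.hom).1 inferInstance
  have hε : Function.Surjective ε := by
    have : Epi ε := epi_comp _ _
    exact (ModuleCat.epi_iff_surjective ε).1 this
  let qc : ModuleCat.of R M ⟶ TT := ModuleCat.ofHom q
  have hqc : Epi qc := (ModuleCat.epi_iff_surjective qc).2 hq
  let α0 : F.complex.X 0 ⟶ ModuleCat.of R M := Projective.factorThru ε qc
  have hα0 : α0 ≫ qc = ε := Projective.factorThru_comp ε qc
  have hd1 : ∀ x : F.complex.X 1, q (α0 (F.complex.d 1 0 x)) ∈ ({0} : Set T) := by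
    intro x
    have h1 : qc (α0 (F.complex.d 1 0 x)) = ε (F.complex.d 1 0 x) := by
      rw [← hα0]; rfl
    have h2 : ε (F.complex.d 1 0 x) = sT.hom (F.π.f 0 (F.complex.d 1 0 x)) := rfl
    have h3 : F.π.f 0 (F.complex.d 1 0 x) = 0 := by
      have := F.complex_d_comp_π_f_zero
      calc F.π.f 0 (F.complex.d 1 0 x) = (F.complex.d 1 0 ≫ F.π.f 0) x := rfl
        _ = (0 : F.complex.X 1 ⟶ _) x := by rw [this]
        _ = 0 := rfl
    simp only [Set.mem_singleton_iff]
    show qc (α0 (F.complex.d 1 0 x)) = 0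
    rw [h1, h2, h3, map_zero]
  let α1 : (F.complex.X 1 : Type) →ₗ[R] LinearMap.ker q :=
    LinearMap.codRestrict (LinearMap.ker q)
      ((α0.hom : (F.complex.X 0 : Type) →ₗ[R] M) ∘ₗ ((F.complex.d 1 0).hom : (F.complex.X 1 : Type) →ₗ[R] F.complex.X 0))
      (fun x => by simpa using hd1 x)
  let ψ : F.complex.X 1 ⟶ ModuleCat.of R P := ModuleCat.ofHom (b ∘ₗ α1)
  let K := F.complex.linearYonedaObj ℤ (ModuleCat.of R P)
  have hKzero : Limits.IsZero (K.homology 1) := by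
    have e := F.isoExt (n := 1) (ModuleCat.of R P) (R := ℤ)
    exact ((ModuleCat.isZero_of_subsingleton _).of_iso e.symm)
  have hKexact : K.ExactAt 1 := (HomologicalComplex.exactAt_iff_isZero_homology K 1).2 hKzero
  have hK := (HomologicalComplex.exactAt_iff' K 0 1 2 (by simp) (by simp)).1 hKexact
  rw [ShortComplex.moduleCat_exact_iff] at hK
  have hcocycle : K.d 1 2 ψ = 0 := by
    have : K.d 1 2 ψ = F.complex.d 2 1 ≫ ψ := by
      rw [ChainComplex.linearYonedaObj_d]; rfl
    rw [this]
    refine ModuleCat.hom_ext (LinearMap.ext fun x => ?_)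
    show b (α1 (F.complex.d 2 1 x)) = 0
    have : α1 (F.complex.d 2 1 x) = 0 := by
      apply Subtype.ext
      show α0 (F.complex.d 1 0 (F.complex.d 2 1 x)) = 0
      have hdd : F.complex.d 1 0 (F.complex.d 2 1 x) = (F.complex.d 2 1 ≫ F.complex.d 1 0) x := rfl
      rw [hdd, F.complex.d_comp_d 2 1 0]
      show α0 ((0 : F.complex.X 2 →ₗ[R] F.complex.X 0) x) = 0
      rw [LinearMap.zero_apply, map_zero]
    rw [this, map_zero]
  obtain ⟨ψ0, hψ0⟩ := hK ψ hcocycle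
  have hψ0' : F.complex.d 1 0 ≫ ψ0 = ψ := by
    have : K.d 0 1 ψ0 = F.complex.d 1 0 ≫ ψ0 := by
      rw [ChainComplex.linearYonedaObj_d]; rfl
    rw [← this]; exact hψ0
  let ψ0' : F.complex.X 0 ⟶ ModuleCat.of R P := ψ0
  have hψψ : F.complex.d 1 0 ≫ ψ0' = ψ := hψ0'
  let a0 : (F.complex.X 0 : Type) →ₗ[R] M := α0.hom
  let p0 : (F.complex.X 0 : Type) →ₗ[R] P := ψ0'.hom
  let d10 : (F.complex.X 1 : Type) →ₗ[R] (F.complex.X 0 : Type) := (F.complex.d 1 0).hom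
  have hexact0 := F.exact₀
  rw [ShortComplex.moduleCat_exact_iff] at hexact0
  let Φ : ((F.complex.X 0 : Type) × LinearMap.ker q) →ₗ[R] M :=
    LinearMap.coprod a0 (LinearMap.ker q).subtype
  let Ψ : ((F.complex.X 0 : Type) × LinearMap.ker q) →ₗ[R] P :=
    LinearMap.coprod p0 b
  have hqα : ∀ x : F.complex.X 0, q (a0 x) = ε x := by
    intro x
    show (α0 ≫ qc) x = ε x
    rw [hα0]
  have hΦ : Function.Surjective Φ := by
    intro m
    obtain ⟨x, hx⟩ := hε (q m)
    refine ⟨(x, ⟨m - a0 x, ?_⟩), ?_⟩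
    · rw [LinearMap.mem_ker, map_sub, hqα, hx, sub_self]
    · show a0 x + (m - a0 x) = m
      abel
  have hle : LinearMap.ker Φ ≤ LinearMap.ker Ψ := by
    rintro ⟨x, k⟩ hv
    have hv' : a0 x + (k : M) = 0 := hv
    have hαx : a0 x = -(k : M) := eq_neg_of_add_eq_zero_left hv'
    have hεx : F.π.f 0 x = 0 := by
      apply hsT
      show ε x = sT.hom 0
      rw [map_zero, ← hqα, hαx, map_neg]
      rw [k.2]; exact neg_zero
    obtain ⟨y, hy⟩ := hexact0 x hεx
    have hy' : d10 y = x := hy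
    have hk : k = -(α1 y) := by
      apply Subtype.ext
      show (k : M) = -(a0 (d10 y))
      rw [hy', hαx, neg_neg]
    show p0 x + b k = 0
    have hψy : p0 x = b (α1 y) := by
      rw [← hy']
      show (F.complex.d 1 0 ≫ ψ0') y = b (α1 y)
      rw [hψψ]
      rfl
    rw [hψy, hk, map_neg, add_neg_cancel]
  let e := Φ.quotKerEquivOfSurjective hΦ
  let h : M →ₗ[R] P := ((LinearMap.ker Φ).liftQ Ψ hle) ∘ₗ (e.symm : M →ₗ[R] _)
  have hh : ∀ v, h (Φ v) = Ψ v := by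
    intro v
    have h1 : e (Submodule.Quotient.mk v) = Φ v := rfl
    have h2 : e.symm (Φ v) = Submodule.Quotient.mk v := by
      rw [← h1, LinearEquiv.symm_apply_apply]
    show ((LinearMap.ker Φ).liftQ Ψ hle) (e.symm (Φ v)) = Ψ v
    rw [h2, Submodule.liftQ_apply]
  refine ⟨h, fun k => ?_⟩
  have hk0 : (k : M) = Φ (0, k) := by
    show (k : M) = a0 0 + (k : M)
    rw [map_zero, zero_add]
  rw [hk0, hh]
  show p0 0 + b k = b k
  rw [map_zero, zero_add]

theorem split_epi_of_subdirect_product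
    (R : Type) [Ring R] (P : Type) [AddCommGroup P] [Module R P]
    (A B : Submodule R P) (hAB : A ⊓ B = ⊥)
    (hhom : ∀ f : (P ⧸ (A ⊔ B)) →ₗ[R] (P ⧸ A), f = 0)
    (hext : Subsingleton (Ext1 R (P ⧸ (A ⊔ B)) P)) :
    (∃ s : (P ⧸ A) →ₗ[R] P, A.mkQ ∘ₗ s = LinearMap.id) ∧
    (Module.Projective R P → Module.Projective R (P ⧸ A)) := by

  let φ : (P ⧸ A) →ₗ[R] (P ⧸ (A ⊔ B)) :=
    Submodule.mapQ A (A ⊔ B) LinearMap.id (fun x hx => (le_sup_left : A ≤ A ⊔ B) hx)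
  have hφmk : ∀ p : P, φ (A.mkQ p) = (A ⊔ B).mkQ p := fun p => rfl
  have hφ : Function.Surjective φ := by
    intro t
    obtain ⟨p, rfl⟩ := (A ⊔ B).mkQ_surjective t
    exact ⟨A.mkQ p, hφmk p⟩
  let πB : B →ₗ[R] (P ⧸ A) := A.mkQ ∘ₗ B.subtype
  have hπBinj : Function.Injective πB := by
    intro x y hxy
    apply Subtype.ext
    have : ((x : P) - y) ∈ A := by
      rw [← Submodule.Quotient.eq]
      exact hxy
    have h2 : ((x : P) - y) ∈ A ⊓ B := ⟨this, sub_mem x.2 y.2⟩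
    rw [hAB] at h2
    exact sub_eq_zero.mp h2
  have hrange : LinearMap.range πB = LinearMap.ker φ := by
    apply le_antisymm
    · rintro _ ⟨x, rfl⟩
      show φ (A.mkQ x) = 0
      rw [hφmk, Submodule.mkQ_apply, Submodule.Quotient.mk_eq_zero]
      exact (le_sup_right : B ≤ A ⊔ B) x.2
    · rintro x hx
      obtain ⟨p, rfl⟩ := A.mkQ_surjective x
      have hp : p ∈ A ⊔ B := by
        rw [LinearMap.mem_ker, hφmk, Submodule.mkQ_apply, Submodule.Quotient.mk_eq_zero] at hx
        exact hx
      obtain ⟨a, ha, bb, hb, rfl⟩ := Submodule.mem_sup.mp hp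
      refine ⟨⟨bb, hb⟩, ?_⟩
      show A.mkQ bb = A.mkQ (a + bb)
      rw [Submodule.mkQ_apply, Submodule.mkQ_apply, Submodule.Quotient.eq]
      simpa using A.neg_mem ha
  let eB := LinearEquiv.ofInjective πB hπBinj
  let eK : LinearMap.ker φ ≃ₗ[R] LinearMap.range πB := LinearEquiv.ofEq _ _ hrange.symm
  let b : LinearMap.ker φ →ₗ[R] P :=
    B.subtype ∘ₗ (eB.symm : LinearMap.range πB →ₗ[R] B) ∘ₗ (eK : LinearMap.ker φ →ₗ[R] _)
  have hbx : ∀ x : LinearMap.ker φ, A.mkQ (b x) = (x : P ⧸ A) := by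
    intro x
    show πB (eB.symm (eK x)) = (x : P ⧸ A)
    have := eB.apply_symm_apply (eK x)
    calc πB (eB.symm (eK x)) = ((eB (eB.symm (eK x))) : P ⧸ A) := by
          rw [LinearEquiv.ofInjective_apply]
      _ = ((eK x : LinearMap.range πB) : P ⧸ A) := by rw [this]
      _ = (x : P ⧸ A) := rfl
  obtain ⟨h, hh⟩ := key R (P ⧸ A) P (P ⧸ (A ⊔ B)) φ hφ hext b
  have hsect : A.mkQ ∘ₗ h = LinearMap.id := by
    let D : (P ⧸ A) →ₗ[R] (P ⧸ A) := LinearMap.id - A.mkQ ∘ₗ h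
    have hD : LinearMap.ker φ ≤ LinearMap.ker D := by
      intro x hx
      show x - A.mkQ (h x) = 0
      rw [show h x = b ⟨x, hx⟩ from hh ⟨x, hx⟩, hbx ⟨x, hx⟩]
      exact sub_self x
    let e2 := φ.quotKerEquivOfSurjective hφ
    let f : (P ⧸ (A ⊔ B)) →ₗ[R] (P ⧸ A) :=
      ((LinearMap.ker φ).liftQ D hD) ∘ₗ (e2.symm : (P ⧸ (A ⊔ B)) →ₗ[R] _)
    have hf : ∀ m, f (φ m) = D m := by
      intro m
      have h1 : e2 (Submodule.Quotient.mk m) = φ m := rfl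
      have h2 : e2.symm (φ m) = Submodule.Quotient.mk m := by
        rw [← h1, LinearEquiv.symm_apply_apply]
      show ((LinearMap.ker φ).liftQ D hD) (e2.symm (φ m)) = D m
      rw [h2, Submodule.liftQ_apply]
    have hf0 := hhom f
    refine LinearMap.ext fun m => ?_
    have hDm := hf m
    rw [hf0] at hDm
    have hD0 : D m = 0 := by rw [← hDm]; rfl
    have hsub : m - A.mkQ (h m) = 0 := hD0
    show A.mkQ (h m) = m
    exact (sub_eq_zero.mp hsub).symm
  refine ⟨⟨h, hsect⟩, fun hP => ?_⟩
  exact Module.Projective.of_split h A.mkQ hsect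
end

section
/- Let R be a ring, P a finitely generated projective R-module, and A, B submodules of P with A ∩ B = 0 such that T = P/(A+B) satisfies Hom(T,R) = 0 and Ext¹(T,R) = 0 (i.e., T has grade at least 2). If M = P/A is torsionless, then M is projective. -/
open CategoryTheory Opposite Limits

section Helpers

variable {R : Type} [Ring R]

private lemma exists_comp_eq_of_range_le {M N E : Type} [AddCommGroup M] [Module R M]
    [AddCommGroup N] [Module R N] [AddCommGroup E] [Module R E]
    (i : N →ₗ[R] E) (hi : Function.Injective i) (f : M →ₗ[R] E)
    (hf : ∀ x, f x ∈ LinearMap.range i) :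
    ∃ G : M →ₗ[R] N, ∀ x, i (G x) = f x := by
  refine ⟨(LinearEquiv.ofInjective i hi).symm.toLinearMap ∘ₗ f.codRestrict _ hf, fun x => ?_⟩
  exact congrArg Subtype.val ((LinearEquiv.ofInjective i hi).apply_symm_apply ⟨f x, hf x⟩)

private lemma splitting_of_subsingleton_ext (T : ModuleCat R)
    (hext : Subsingleton (((Ext ℤ (ModuleCat R) 1).obj (op T)).obj (ModuleCat.of R R)))
    (E : ModuleCat R) (i : ModuleCat.of R R ⟶ E) (p : E ⟶ T)
    (hi : Function.Injective i) (hp : Function.Surjective p)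
    (hexact : LinearMap.range i.hom = LinearMap.ker p.hom) :
    ∃ s : T ⟶ E, s ≫ p = 𝟙 T := by
  haveI hEpi : Epi p := (ModuleCat.epi_iff_surjective p).2 hp
  haveI : Mono i := (ModuleCat.mono_iff_injective i).2 hi
  set pr := CategoryTheory.projectiveResolution T with hpr
  set φ₀ : pr.complex.X 0 ⟶ E := @Projective.factorThru _ _ _ _ _ _ (pr.π.f 0) p hEpi with hφ₀def
  have hφ₀ : φ₀ ≫ p = pr.π.f 0 := @Projective.factorThru_comp _ _ _ _ _ _ (pr.π.f 0) p hEpi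
  have hip : i ≫ p = 0 := by
    refine ModuleCat.hom_ext (LinearMap.ext fun x => ?_)
    have : i x ∈ LinearMap.ker p.hom := hexact ▸ LinearMap.mem_range_self _ x
    exact this
  have hland : ∀ x, (pr.complex.d 1 0 ≫ φ₀) x ∈ LinearMap.range i.hom := by
    intro x
    rw [hexact, LinearMap.mem_ker]
    have h0 : (pr.complex.d 1 0 ≫ φ₀) ≫ p = 0 := by
      rw [Category.assoc, hφ₀]
      exact pr.complex_d_comp_π_f_zero
    exact congrFun (congrArg (fun (f : _ ⟶ _) => (f : _ → _)) h0) x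
  obtain ⟨φ₁, hφ₁⟩ := exists_comp_eq_of_range_le i.hom hi
    (pr.complex.d 1 0 ≫ φ₀).hom hland
  have hφ₁c : (ModuleCat.ofHom φ₁ : pr.complex.X 1 ⟶ ModuleCat.of R R) ≫ i = pr.complex.d 1 0 ≫ φ₀ := by
    ext x; exact hφ₁ x
  have hcocycle : pr.complex.d 2 1 ≫ (ModuleCat.ofHom φ₁ : pr.complex.X 1 ⟶ ModuleCat.of R R) = 0 := by
    rw [← cancel_mono i, Category.assoc, hφ₁c, ← Category.assoc,
      HomologicalComplex.d_comp_d, Limits.zero_comp, Limits.zero_comp]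
  -- exactness of the Yoneda complex at 1
  have hexactAt : (pr.complex.linearYonedaObj ℤ (ModuleCat.of R R)).ExactAt 1 := by
    rw [HomologicalComplex.exactAt_iff_isZero_homology]
    haveI : Subsingleton ((pr.complex.linearYonedaObj ℤ (ModuleCat.of R R)).homology 1) :=
      Equiv.subsingleton
        ((forget (ModuleCat ℤ)).mapIso (pr.isoExt 1 (ModuleCat.of R R))).toEquiv.symm
    exact ModuleCat.isZero_of_subsingleton _
  have hsc := (HomologicalComplex.exactAt_iff'
    (pr.complex.linearYonedaObj ℤ (ModuleCat.of R R)) 0 1 2 (by simp) (by simp)).1 hexactAt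
  rw [ShortComplex.moduleCat_exact_iff] at hsc
  obtain ⟨h, hh⟩ := hsc (ModuleCat.ofHom φ₁ : pr.complex.X 1 ⟶ ModuleCat.of R R)
    (show pr.complex.d 2 1 ≫ _ = 0 from hcocycle)
  have hh' : pr.complex.d 1 0 ≫ (h : pr.complex.X 0 ⟶ ModuleCat.of R R) =
      (ModuleCat.ofHom φ₁ : pr.complex.X 1 ⟶ ModuleCat.of R R) := hh
  set ψ : pr.complex.X 0 ⟶ E := φ₀ - (h : pr.complex.X 0 ⟶ ModuleCat.of R R) ≫ i with hψdef
  have hw : pr.complex.d 1 0 ≫ ψ = 0 := by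
    rw [hψdef, Preadditive.comp_sub, ← hφ₁c, ← hh']
    exact sub_eq_zero.mpr (Category.assoc _ _ _)
  obtain ⟨s, hs⟩ : ∃ s : T ⟶ E, pr.π.f 0 ≫ s = ψ :=
    ⟨Cofork.IsColimit.desc pr.isColimitCokernelCofork ψ (by rw [hw, Limits.zero_comp]), by
      exact Cofork.IsColimit.π_desc pr.isColimitCokernelCofork⟩
  refine ⟨s, ?_⟩
  have hψp : ψ ≫ p = pr.π.f 0 := by
    rw [hψdef, Preadditive.sub_comp]
    exact (congrArg₂ (fun a b => a - b) hφ₀ (((Category.assoc _ _ _).trans (congrArg (fun q => (h : pr.complex.X 0 ⟶ ModuleCat.of R R) ≫ q) hip)).trans Limits.comp_zero)).trans (sub_zero _)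
  apply (cancel_epi (pr.π.f 0)).1
  exact (Category.assoc _ _ _).symm.trans ((congrArg (· ≫ p) hs).trans (hψp.trans (Category.comp_id _).symm))


private lemma extend_functional {M T : Type} [AddCommGroup M] [Module R M]
    [AddCommGroup T] [Module R T]
    (hext : Subsingleton
      (((Ext ℤ (ModuleCat R) 1).obj (op (ModuleCat.of R T))).obj (ModuleCat.of R R)))
    (π : M →ₗ[R] T) (hπ : Function.Surjective π) (g : LinearMap.ker π →ₗ[R] R) :
    ∃ G : M →ₗ[R] R, ∀ x : LinearMap.ker π, G x = g x := by
  classical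
  set w : LinearMap.ker π →ₗ[R] R × M := g.prod (-(LinearMap.ker π).subtype) with hw
  set W := LinearMap.range w with hWdef
  set i : R →ₗ[R] (R × M) ⧸ W := W.mkQ ∘ₗ LinearMap.inl R R M with hidef
  have hker : ∀ n : LinearMap.ker π, π (n : M) = 0 := fun n => n.2
  set pmap : (R × M) ⧸ W →ₗ[R] T := W.liftQ (π ∘ₗ LinearMap.snd R R M) (by
    rintro _ ⟨n, rfl⟩
    simp [hw, hker n]) with hpdef
  have hi : Function.Injective i := by
    rw [← LinearMap.ker_eq_bot, eq_bot_iff]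
    rintro r hr
    have hmem : ((r, 0) : R × M) ∈ W := by
      rw [← Submodule.Quotient.mk_eq_zero W]
      exact LinearMap.mem_ker.mp hr
    obtain ⟨n, hn⟩ := hmem
    have hn2 : -(n : M) = 0 := congrArg Prod.snd hn
    have hn0 : n = 0 := by
      ext
      simpa using hn2
    have : r = 0 := by
      have := congrArg Prod.fst hn
      simp [hw, hn0] at this
      exact this.symm
    simp [this]
  have hpsurj : Function.Surjective pmap := by
    intro t
    obtain ⟨m, rfl⟩ := hπ t
    exact ⟨W.mkQ (0, m), by simp [hpdef]⟩
  have hex : LinearMap.range i = LinearMap.ker pmap := by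
    ext e
    constructor
    · rintro ⟨r, rfl⟩
      simp [hidef, hpdef]
    · intro he
      obtain ⟨⟨r, m⟩, rfl⟩ := W.mkQ_surjective e
      have hm : π m = 0 := by simpa [hpdef] using he
      refine ⟨r + g ⟨m, LinearMap.mem_ker.mpr hm⟩, ?_⟩
      show W.mkQ (r + g ⟨m, LinearMap.mem_ker.mpr hm⟩, 0) = W.mkQ (r, m)
      rw [Submodule.mkQ_apply, Submodule.mkQ_apply, Submodule.Quotient.eq]
      exact ⟨⟨m, LinearMap.mem_ker.mpr hm⟩, by simp [hw]⟩
  obtain ⟨s, hs⟩ := splitting_of_subsingleton_ext (ModuleCat.of R T) hext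
    (ModuleCat.of R ((R × M) ⧸ W)) (ModuleCat.ofHom i) (ModuleCat.ofHom pmap) hi hpsurj hex
  have hsp : ∀ t, pmap (s t) = t :=
    fun t => congrFun (congrArg (fun (f : ModuleCat.of R T ⟶ ModuleCat.of R T) =>
      (f : T → T)) hs) t
  set e : M →ₗ[R] (R × M) ⧸ W := W.mkQ ∘ₗ LinearMap.inr R R M with hedef
  let smap : T →ₗ[R] (R × M) ⧸ W := s.hom
  have hsp' : ∀ t, pmap (smap t) = t := hsp
  set δ : M →ₗ[R] (R × M) ⧸ W := e - smap ∘ₗ π with hδdef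
  have hδ : ∀ m, δ m ∈ LinearMap.range i := by
    intro m
    rw [hex, LinearMap.mem_ker]
    have := hsp' (π m)
    simp [hδdef, hedef, hpdef, smap] at this ⊢
    simp [this]
  obtain ⟨G, hG⟩ := exists_comp_eq_of_range_le i hi δ hδ
  refine ⟨G, fun n => hi ?_⟩
  rw [hG]
  have h1 : δ (n : M) = e (n : M) := by simp [hδdef, hker n]
  rw [h1]
  show W.mkQ (0, (n : M)) = W.mkQ (g n, 0)
  rw [Submodule.mkQ_apply, Submodule.mkQ_apply, Submodule.Quotient.eq]
  exact ⟨-n, by simp [hw]⟩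

end Helpers

/-- An `R`-module `M` is torsionless if it embeds into a direct power `R^I`. -/
def Torsionless (R : Type) [Ring R] (M : Type) [AddCommGroup M] [Module R M] : Prop :=
  ∃ (I : Type) (f : M →ₗ[R] (I → R)), Function.Injective f

theorem torsionless_projective_up_to_grade_two_is_projective
    (R : Type) [Ring R] (P : Type) [AddCommGroup P] [Module R P]
    (hfg : Module.Finite R P) (hproj : Module.Projective R P)
    (A B : Submodule R P) (hAB : A ⊓ B = ⊥)
    (hhom : ∀ f : (P ⧸ (A ⊔ B)) →ₗ[R] R, f = 0)
    (hext : Subsingleton (Ext1 R (P ⧸ (A ⊔ B)) R))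
    (htl : Torsionless R (P ⧸ A)) :
    Module.Projective R (P ⧸ A) := by
  classical
  obtain ⟨n, v, u, hvsurj, huinj, hvu⟩ := Module.Finite.exists_comp_eq_id_of_projective R P
  set x : Fin n → P := fun i => v (fun j => if i = j then 1 else 0) with hxdef
  have hdual : ∀ p : P, ∑ i, (u p i) • x i = p := by
    intro p
    have h1 : v (u p) = p := LinearMap.congr_fun hvu p
    have h2 := LinearMap.pi_apply_eq_sum_univ v (u p)
    rw [h1] at h2
    exact h2.symm
  -- the quotient map τ : P⧸A → P⧸(A⊔B)
  set τ : (P ⧸ A) →ₗ[R] (P ⧸ (A ⊔ B)) :=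
    Submodule.liftQ A (A ⊔ B).mkQ (by rw [Submodule.ker_mkQ]; exact le_sup_left) with hτdef
  have hτmk : ∀ p : P, τ (A.mkQ p) = (A ⊔ B).mkQ p := fun p => rfl
  have hτsurj : Function.Surjective τ := by
    intro t
    obtain ⟨p, rfl⟩ := (A ⊔ B).mkQ_surjective t
    exact ⟨A.mkQ p, hτmk p⟩
  -- the image of B in P⧸A is the kernel of τ
  set ι : B →ₗ[R] (P ⧸ A) := A.mkQ ∘ₗ B.subtype with hιdef
  have hιmem : ∀ b : B, ι b ∈ LinearMap.ker τ := by
    intro b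
    rw [LinearMap.mem_ker]
    show τ (A.mkQ (b : P)) = 0
    rw [hτmk, Submodule.mkQ_apply, Submodule.Quotient.mk_eq_zero]
    exact Submodule.mem_sup_right b.2
  have hιinj : Function.Injective ι := by
    rw [← LinearMap.ker_eq_bot, eq_bot_iff]
    rintro b hb
    have hbA : (b : P) ∈ A := by
      have : A.mkQ (b : P) = 0 := hb
      rwa [Submodule.mkQ_apply, Submodule.Quotient.mk_eq_zero] at this
    have hmem : (b : P) ∈ A ⊓ B := ⟨hbA, b.2⟩
    rw [hAB] at hmem
    rw [Submodule.mem_bot]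
    exact Subtype.ext ((Submodule.mem_bot R).mp hmem)
  have hιsurj : ∀ y : LinearMap.ker τ, ∃ b : B, ι b = (y : P ⧸ A) := by
    rintro ⟨y, hy⟩
    obtain ⟨p, rfl⟩ := A.mkQ_surjective y
    have hp : p ∈ A ⊔ B := by
      have : (A ⊔ B).mkQ p = 0 := hy
      rwa [Submodule.mkQ_apply, Submodule.Quotient.mk_eq_zero] at this
    obtain ⟨a, ha, b, hb, rfl⟩ := Submodule.mem_sup.mp hp
    refine ⟨⟨b, hb⟩, ?_⟩
    show A.mkQ b = A.mkQ (a + b)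
    rw [← sub_eq_zero, ← map_sub, Submodule.mkQ_apply, Submodule.Quotient.mk_eq_zero]
    simpa using A.neg_mem ha
  -- the equivalence B ≃ ker τ
  set ιr : B →ₗ[R] LinearMap.ker τ := ι.codRestrict (LinearMap.ker τ) hιmem with hιrdef
  have hιrbij : Function.Bijective ιr := by
    constructor
    · intro b b' h
      exact hιinj (congrArg Subtype.val h)
    · intro y
      obtain ⟨b, hb⟩ := hιsurj y
      exact ⟨b, Subtype.ext hb⟩
  set eB : B ≃ₗ[R] LinearMap.ker τ := LinearEquiv.ofBijective ιr hιrbij with heBdef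
  -- extend each coordinate functional from ker τ to P⧸A
  have hGex : ∀ i : Fin n, ∃ G : (P ⧸ A) →ₗ[R] R,
      ∀ y : LinearMap.ker τ, G y = ((LinearMap.proj i ∘ₗ u) ∘ₗ B.subtype ∘ₗ
        eB.symm.toLinearMap) y :=
    fun i => extend_functional hext τ hτsurj _
  choose G hG using hGex
  have hGι : ∀ (i : Fin n) (b : B), G i (ι b) = u (b : P) i := by
    intro i b
    have h1 : G i (ιr b : P ⧸ A) = ((LinearMap.proj i ∘ₗ u) ∘ₗ B.subtype ∘ₗ
        eB.symm.toLinearMap) (ιr b) := hG i (ιr b)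
    have h2 : eB.symm (ιr b) = b := eB.symm_apply_apply b
    show G i (ιr b : P ⧸ A) = _
    simpa [h2] using h1
  -- the candidate section
  set s : (P ⧸ A) →ₗ[R] P := ∑ i, (G i).smulRight (x i) with hsdef
  have hsι : ∀ b : B, s (ι b) = (b : P) := by
    intro b
    rw [hsdef]
    rw [LinearMap.sum_apply]
    simp only [LinearMap.smulRight_apply]
    rw [Finset.sum_congr rfl (fun i _ => by rw [hGι i b])]
    exact hdual (b : P)
  set φ : (P ⧸ A) →ₗ[R] (P ⧸ A) := A.mkQ ∘ₗ s - LinearMap.id with hφdef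
  have hφker : ∀ y ∈ LinearMap.ker τ, φ y = 0 := by
    intro y hy
    obtain ⟨b, rfl⟩ := hιsurj ⟨y, hy⟩
    simp only [hφdef, LinearMap.sub_apply, LinearMap.comp_apply, LinearMap.id_apply, hsι b]
    rw [sub_eq_zero]
    rfl
  -- φ factors through P⧸(A⊔B), hence vanishes
  obtain ⟨I, emb, hemb⟩ := htl
  have hφ : φ = 0 := by
    refine LinearMap.ext fun y => ?_
    obtain ⟨p, rfl⟩ := A.mkQ_surjective y
    rw [LinearMap.zero_apply]
    have hcoord : ∀ k : I, emb (φ (A.mkQ p)) k = 0 := by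
      intro k
      set χ : (P ⧸ (A ⊔ B)) →ₗ[R] R :=
        Submodule.liftQ (A ⊔ B) ((LinearMap.proj k ∘ₗ emb) ∘ₗ φ ∘ₗ A.mkQ) (by
          intro q hq
          have : φ (A.mkQ q) = 0 := hφker _ (by
            rw [LinearMap.mem_ker, hτmk, Submodule.mkQ_apply, Submodule.Quotient.mk_eq_zero]
            exact hq)
          rw [LinearMap.mem_ker, LinearMap.comp_apply, LinearMap.comp_apply,
            LinearMap.comp_apply, this, map_zero, map_zero]) with hχdef
      have : χ = 0 := hhom χ
      have h2 : χ ((A ⊔ B).mkQ p) = 0 := by rw [this]; rfl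
      simpa [hχdef] using h2
    have : emb (φ (A.mkQ p)) = 0 := funext hcoord
    have := hemb (by rw [this, map_zero] : emb (φ (A.mkQ p)) = emb 0)
    simpa using this
  have hsplit : A.mkQ ∘ₗ s = LinearMap.id := by
    have := sub_eq_zero.mp (hφdef ▸ hφ)
    exact this
  haveI := hproj
  exact Module.Projective.of_split s A.mkQ hsplit
end

section
/- Let R be a commutative Noetherian domain, P a finitely generated projective R-module, and A, B submodules of P with A ∩ B = 0 such that T = P/(A+B) satisfies Hom(T,R) = 0 = Ext¹(T,R). Then the torsion-free quotient M/tor(M) of M = P/A is projective. -/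
open CategoryTheory Opposite

/-- A finitely generated torsion-free module over a domain whose dual vanishes is trivial. -/
theorem aux_subsingleton_of_dual_zero {R : Type} [CommRing R] [IsDomain R]
    {M : Type} [AddCommGroup M] [Module R M]
    [Module.Finite R M] [NoZeroSMulDivisors R M]
    (h : ∀ f : M →ₗ[R] R, f = 0) : Subsingleton M := by
  by_contra hns
  rw [not_subsingleton_iff_nontrivial] at hns
  obtain ⟨x, hx⟩ := exists_ne (0 : M)
  classical
  set S := nonZeroDivisors R
  let K := FractionRing R
  let V := LocalizedModule S M
  let mkL : M →ₗ[R] V := LocalizedModule.mkLinearMap S M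
  have hx' : mkL x ≠ 0 := by
    intro h0
    obtain ⟨s, hs⟩ := (IsLocalizedModule.eq_zero_iff S mkL).mp h0
    rcases smul_eq_zero.mp hs with h1 | h2
    · exact nonZeroDivisors.ne_zero s.2 h1
    · exact hx h2
  haveI : Module.Finite K V := Module.Finite.of_isLocalizedModule S mkL
  have hφ : ¬ ∀ φ : Module.Dual K V, φ (mkL x) = 0 := by
    rw [Module.forall_dual_apply_eq_zero_iff K (mkL x)]
    exact hx'
  push_neg at hφ
  obtain ⟨φ, hφ⟩ := hφ
  obtain ⟨n, v, hv⟩ := Module.Finite.exists_fin (R := R) (M := M)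
  obtain ⟨b, hb⟩ := IsLocalization.exist_integer_multiples (S := K) S Finset.univ
      (fun i : Fin n => φ (mkL (v i)))
  let L : M →ₗ[R] K := (b : R) • ((φ.restrictScalars R).comp mkL)
  have hmem : ∀ m : M, L m ∈ LinearMap.range (Algebra.linearMap R K) := by
    intro m
    have hle : Submodule.span R (Set.range v) ≤
        (LinearMap.range (Algebra.linearMap R K)).comap L := by
      rw [Submodule.span_le]
      rintro _ ⟨i, rfl⟩
      obtain ⟨r, hr⟩ := hb i (Finset.mem_univ i)
      exact ⟨r, by simpa [L] using hr⟩
    exact hle (hv ▸ Submodule.mem_top)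
  have halg : Function.Injective (Algebra.linearMap R K) := IsFractionRing.injective R K
  let e := LinearEquiv.ofInjective (Algebra.linearMap R K) halg
  let f : M →ₗ[R] R := e.symm.toLinearMap.comp (L.codRestrict _ hmem)
  have hf0 : f x = 0 := by rw [h f]; rfl
  have hcod : L.codRestrict _ hmem x = 0 :=
    (LinearEquiv.map_eq_zero_iff e.symm).mp
      (show e.symm (L.codRestrict _ hmem x) = 0 from hf0)
  have hLx : (b : R) • φ (mkL x) = 0 := by
    have := congrArg Subtype.val hcod
    simpa [L] using this
  have hb0 : algebraMap R K b ≠ 0 := (IsLocalization.map_units K b).ne_zero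
  rw [Algebra.smul_def] at hLx
  exact hφ ((mul_eq_zero.mp hLx).resolve_left hb0)

/-- If `Ext¹(P/W, R) = 0` then every functional on `W` extends to `P` (for `P` projective). -/
theorem aux_ext1_extension {R : Type} [CommRing R] {P : Type} [AddCommGroup P] [Module R P]
    (hproj : Module.Projective R P) (W : Submodule R P)
    (hext : Subsingleton (Ext1 R (P ⧸ W) R)) (g : W →ₗ[R] R) :
    ∃ G : P →ₗ[R] R, ∀ w : W, G (w : P) = g w := by
  haveI := hproj
  let T : ModuleCat R := ModuleCat.of R (P ⧸ W)
  let pres : CategoryTheory.ProjectiveResolution T := (HasProjectiveResolution.out (Z := T)).some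
  let Y : ModuleCat R := ModuleCat.of R R
  let Kc := pres.complex.linearYonedaObj ℤ Y
  have hz : Limits.IsZero (Kc.homology 1) := by
    have h1 : Limits.IsZero (((Ext ℤ (ModuleCat R) 1).obj (op T)).obj Y) := by
      haveI : Subsingleton (((Ext ℤ (ModuleCat R) 1).obj (op T)).obj Y) := hext
      exact ModuleCat.isZero_of_subsingleton _
    exact h1.of_iso (pres.isoExt 1 Y).symm
  have hexact : (Kc.sc' 0 1 2).Exact :=
    (Kc.exactAt_iff' 0 1 2 (by simp) (by simp)).mp
      ((Kc.exactAt_iff_isZero_homology 1).mpr hz)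
  -- module-level data
  let P0 := pres.complex.X 0
  let P1 := pres.complex.X 1
  let P2 := pres.complex.X 2
  let d10 : P1 ⟶ P0 := pres.complex.d 1 0
  let d21 : P2 ⟶ P1 := pres.complex.d 2 1
  let π0 : P0 ⟶ T := pres.π.f 0
  have hπ0 : Function.Surjective π0 := by
    rw [← ModuleCat.epi_iff_surjective]; exact (inferInstance : Epi (pres.π.f 0))
  haveI hP0 : Module.Projective R P0 := by
    rw [IsProjective.iff_projective]
    exact (inferInstance : Projective (pres.complex.X 0))
  -- lift π0 through W.mkQ
  obtain ⟨lam, hlam⟩ := Module.projective_lifting_property (R := R)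
    W.mkQ (π0.hom : P0 →ₗ[R] (P ⧸ W)) (Submodule.mkQ_surjective W)
  obtain ⟨s, hs⟩ := Module.projective_lifting_property (R := R)
    (π0.hom : P0 →ₗ[R] (P ⧸ W)) W.mkQ hπ0
  have hd10π : ∀ y : P1, π0 (d10 y) = 0 := by
    intro y
    have h := pres.complex_d_comp_π_f_zero
    calc π0 (d10 y) = (d10 ≫ π0) y := rfl
      _ = (0 : P1 ⟶ T) y := by rw [show d10 ≫ π0 = 0 from h]
      _ = 0 := rfl
  have hmu : ∀ y : P1, lam (d10 y) ∈ W := by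
    intro y
    have h1 : W.mkQ (lam (d10 y)) = 0 := by
      have h2 := congrArg (fun (f : P0 →ₗ[R] (P ⧸ W)) => f (d10 y)) hlam
      simp only [LinearMap.comp_apply] at h2
      exact h2.trans (hd10π y)
    rwa [Submodule.mkQ_apply, Submodule.Quotient.mk_eq_zero] at h1
  let mu : P1 →ₗ[R] W := LinearMap.codRestrict W (lam.comp (d10.hom : P1 →ₗ[R] P0)) hmu
  let c : P1 ⟶ Y := ModuleCat.ofHom (g.comp mu)
  have hKd : ∀ (i j : ℕ) (f : pres.complex.X i ⟶ Y), Kc.d i j f = pres.complex.d j i ≫ f := by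
    intro i j f
    rw [ChainComplex.linearYonedaObj_d]
    rfl
  have hc2 : Kc.d 1 2 c = 0 := by
    rw [hKd 1 2 c]
    apply ModuleCat.hom_ext
    ext z
    show g (mu (d21 z)) = 0
    have h1 : mu (d21 z) = 0 := by
      apply Subtype.ext
      show lam (d10 (d21 z)) = 0
      have hdd : (d21 ≫ d10) = 0 := pres.complex.d_comp_d 2 1 0
      have h3 : d10 (d21 z) = 0 := by
        calc d10 (d21 z) = (d21 ≫ d10) z := rfl
          _ = 0 := by rw [hdd]; rfl
      rw [h3, map_zero]
    rw [h1, map_zero]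
  obtain ⟨h, hh⟩ := (ShortComplex.moduleCat_exact_iff _).mp hexact c hc2
  have hh0 : Kc.d 0 1 h = c := hh
  rw [hKd 0 1 h] at hh0
  let hR : (P0 : Type) →ₗ[R] R := h.hom
  have hh' : hR.comp (d10.hom : P1 →ₗ[R] P0) = c.hom := congrArg ModuleCat.Hom.hom hh0
  have hsw : ∀ x : P, lam (s x) - x ∈ W := by
    intro x
    have h1 : W.mkQ (lam (s x)) = W.mkQ x := by
      have e1 := congrArg (fun (f : P0 →ₗ[R] (P ⧸ W)) => f (s x)) hlam
      have e2 := congrArg (fun (f : P →ₗ[R] (P ⧸ W)) => f x) hs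
      simp only [LinearMap.comp_apply] at e1 e2
      exact e1.trans e2
    have h2 : W.mkQ (lam (s x) - x) = 0 := by rw [map_sub, h1, sub_self]
    rwa [Submodule.mkQ_apply, Submodule.Quotient.mk_eq_zero] at h2
  let tfr : P →ₗ[R] W := LinearMap.codRestrict W ((lam.comp s) - LinearMap.id) hsw
  refine ⟨hR.comp s - g.comp tfr, ?_⟩
  intro w
  have hker : π0 (s (w : P)) = 0 := by
    have e2 := congrArg (fun (f : P →ₗ[R] (P ⧸ W)) => f (w : P)) hs
    simp only [LinearMap.comp_apply] at e2
    rw [show (π0 (s (w : P)) : P ⧸ W) = W.mkQ (w : P) from e2,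
      Submodule.mkQ_apply, Submodule.Quotient.mk_eq_zero]
    exact w.2
  obtain ⟨y, hy⟩ := (ShortComplex.moduleCat_exact_iff _).mp pres.exact₀ (s (w : P)) hker
  have hhy : hR (s (w : P)) = g (mu y) := by
    rw [← hy]
    have := congrArg (fun (f : (P1 : Type) →ₗ[R] R) => f y) hh'
    simp only [LinearMap.comp_apply] at this
    exact this
  have htfr : tfr (w : P) = mu y - w := by
    apply Subtype.ext
    show lam (s (w : P)) - (w : P) = lam (d10 y) - (w : P)
    rw [hy]
  show hR (s (w : P)) - g (tfr (w : P)) = g w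
  rw [htfr, map_sub, hhy, sub_sub_cancel]

theorem torsionFree_factor_projective
    (R : Type) [CommRing R] [IsDomain R] [IsNoetherianRing R]
    (P : Type) [AddCommGroup P] [Module R P]
    (hfg : Module.Finite R P) (hproj : Module.Projective R P)
    (A B : Submodule R P) (hAB : A ⊓ B = ⊥)
    (hhom : ∀ f : (P ⧸ (A ⊔ B)) →ₗ[R] R, f = 0)
    (hext : Subsingleton (Ext1 R (P ⧸ (A ⊔ B)) R)) :
    Module.Projective R ((P ⧸ A) ⧸ Submodule.torsion R (P ⧸ A)) := by
  classical
  haveI := hfg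
  haveI := hproj
  let MA := (P ⧸ A) ⧸ Submodule.torsion R (P ⧸ A)
  let MB := (P ⧸ B) ⧸ Submodule.torsion R (P ⧸ B)
  let ψA : P →ₗ[R] MA := (Submodule.torsion R (P ⧸ A)).mkQ.comp A.mkQ
  let ψB : P →ₗ[R] MB := (Submodule.torsion R (P ⧸ B)).mkQ.comp B.mkQ
  let ψ : P →ₗ[R] MA × MB := ψA.prod ψB
  have hψAsurj : Function.Surjective ψA :=
    (Submodule.mkQ_surjective _).comp (Submodule.mkQ_surjective _)
  have hψBsurj : Function.Surjective ψB :=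
    (Submodule.mkQ_surjective _).comp (Submodule.mkQ_surjective _)
  -- a split embedding of P into a finite free module
  obtain ⟨n, p, hp⟩ := Module.Finite.exists_fin' R P
  obtain ⟨i, hi⟩ := Module.projective_lifting_property p LinearMap.id hp
  have hpi : ∀ x : P, p (i x) = x := by
    intro x
    exact congrArg (fun (f : P →ₗ[R] P) => f x) hi
  have hiinj : Function.Injective i := by
    intro a b hab
    have : p (i a) = p (i b) := by rw [hab]
    rwa [hpi, hpi] at this
  haveI hnz : NoZeroSMulDivisors R P := by
    constructor
    intro r x hrx
    by_cases hr : r = 0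
    · exact Or.inl hr
    · right
      have h1 : r • i x = 0 := by rw [← map_smul, hrx, map_zero]
      rcases smul_eq_zero.mp h1 with h2 | h2
      · exact absurd h2 hr
      · have := hiinj (h2.trans (map_zero i).symm)
        exact this
  -- ψ is injective
  have hψinj : Function.Injective ψ := by
    intro x y hxy
    have hsub : ψ (x - y) = 0 := by rw [map_sub, hxy, sub_self]
    have hA0 : ψA (x - y) = 0 := congrArg Prod.fst hsub
    have hB0 : ψB (x - y) = 0 := congrArg Prod.snd hsub
    have hA1 : A.mkQ (x - y) ∈ Submodule.torsion R (P ⧸ A) := by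
      rwa [show ψA (x - y) = (Submodule.torsion R (P ⧸ A)).mkQ (A.mkQ (x - y)) from rfl,
        Submodule.mkQ_apply, Submodule.Quotient.mk_eq_zero] at hA0
    have hB1 : B.mkQ (x - y) ∈ Submodule.torsion R (P ⧸ B) := by
      rwa [show ψB (x - y) = (Submodule.torsion R (P ⧸ B)).mkQ (B.mkQ (x - y)) from rfl,
        Submodule.mkQ_apply, Submodule.Quotient.mk_eq_zero] at hB0
    obtain ⟨a, ha⟩ := (Submodule.mem_torsion_iff _).mp hA1
    obtain ⟨b, hbb⟩ := (Submodule.mem_torsion_iff _).mp hB1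
    have haA : (a : R) • (x - y) ∈ A := by
      rw [← Submodule.Quotient.mk_eq_zero A, ← Submodule.mkQ_apply, map_smul]
      exact ha
    have hbB : (b : R) • (x - y) ∈ B := by
      rw [← Submodule.Quotient.mk_eq_zero B, ← Submodule.mkQ_apply, map_smul]
      exact hbb
    have hmem : ((a : R) * (b : R)) • (x - y) ∈ A ⊓ B := by
      constructor
      · rw [mul_comm, mul_smul]
        exact A.smul_mem _ haA
      · rw [mul_smul]
        exact B.smul_mem _ hbB
    rw [hAB, Submodule.mem_bot] at hmem
    have hab0 : (a : R) * (b : R) ≠ 0 :=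
      mul_ne_zero (nonZeroDivisors.ne_zero a.2) (nonZeroDivisors.ne_zero b.2)
    have : x - y = 0 := by
      rcases smul_eq_zero.mp hmem with h | h
      · exact absurd h hab0
      · exact h
    exact sub_eq_zero.mp this
  -- every functional on P extends along ψ
  have hW : ∀ φ : P →ₗ[R] R, ∃ Φ : (MA × MB) →ₗ[R] R, ∀ x : P, Φ (ψ x) = φ x := by
    intro φ
    let cop : (A × B) →ₗ[R] P := A.subtype.coprod B.subtype
    have hcopinj : Function.Injective cop := by
      intro u v huv
      have h1 : (u.1 : P) + (u.2 : P) = (v.1 : P) + (v.2 : P) := huv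
      have h2 : (u.1 : P) - (v.1 : P) = (v.2 : P) - (u.2 : P) := by
        rw [sub_eq_sub_iff_add_eq_add]
        rw [add_comm ((v.2 : P)) ((v.1 : P))]
        exact h1
      have hmem : (u.1 : P) - (v.1 : P) ∈ A ⊓ B := by
        constructor
        · exact A.sub_mem u.1.2 v.1.2
        · rw [h2]; exact B.sub_mem v.2.2 u.2.2
      rw [hAB, Submodule.mem_bot, sub_eq_zero] at hmem
      have hmem2 : (v.2 : P) - (u.2 : P) = 0 := by rw [← h2, hmem, sub_self]
      rw [sub_eq_zero] at hmem2
      exact Prod.ext (Subtype.ext hmem) (Subtype.ext hmem2.symm)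
    have hrange : LinearMap.range cop = A ⊔ B := by
      rw [LinearMap.range_coprod, Submodule.range_subtype, Submodule.range_subtype]
    let e : (A × B) ≃ₗ[R] (A ⊔ B : Submodule R P) :=
      (LinearEquiv.ofInjective cop hcopinj).trans (LinearEquiv.ofEq _ _ hrange)
    let g : (A ⊔ B : Submodule R P) →ₗ[R] R :=
      (φ.comp (B.subtype.comp (LinearMap.snd R A B))).comp e.symm.toLinearMap
    obtain ⟨G, hG⟩ := aux_ext1_extension hproj (A ⊔ B) hext g
    have hgval : ∀ (u : A × B), g (e u) = φ (u.2 : P) := by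
      intro u
      show (φ.comp (B.subtype.comp (LinearMap.snd R A B))) (e.symm (e u)) = φ (u.2 : P)
      rw [e.symm_apply_apply]
      rfl
    have hecoe : ∀ (u : A × B), ((e u : (A ⊔ B : Submodule R P)) : P) = (u.1 : P) + (u.2 : P) := by
      intro u
      rfl
    have hGA : ∀ a : P, a ∈ A → G a = 0 := by
      intro a ha
      have h1 : ((e (⟨a, ha⟩, 0) : (A ⊔ B : Submodule R P)) : P) = a := by
        rw [hecoe]; simp
      have h2 := hG (e (⟨a, ha⟩, 0))
      rw [h1] at h2
      rw [h2, hgval]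
      simp
    have hGB : ∀ b : P, b ∈ B → G b = φ b := by
      intro b hb
      have h1 : ((e (0, ⟨b, hb⟩) : (A ⊔ B : Submodule R P)) : P) = b := by
        rw [hecoe]; simp
      have h2 := hG (e (0, ⟨b, hb⟩))
      rw [h1] at h2
      rw [h2, hgval]
    -- factor G through MA
    have hkerA : A ≤ LinearMap.ker G := fun a ha => LinearMap.mem_ker.mpr (hGA a ha)
    let G1 : (P ⧸ A) →ₗ[R] R := A.liftQ G hkerA
    have hkerTA : Submodule.torsion R (P ⧸ A) ≤ LinearMap.ker G1 := by
      intro t ht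
      obtain ⟨a, ha⟩ := (Submodule.mem_torsion_iff _).mp ht
      have h1 : (a : R) • G1 t = 0 := by
        rw [← map_smul, show (a : R) • t = a • t from rfl, ha, map_zero]
      rcases smul_eq_zero.mp h1 with h | h
      · exact absurd h (nonZeroDivisors.ne_zero a.2)
      · exact LinearMap.mem_ker.mpr h
    let α : MA →ₗ[R] R := (Submodule.torsion R (P ⧸ A)).liftQ G1 hkerTA
    have hkerB : B ≤ LinearMap.ker (φ - G) := by
      intro b hb
      rw [LinearMap.mem_ker, LinearMap.sub_apply, hGB b hb, sub_self]
    let G2 : (P ⧸ B) →ₗ[R] R := B.liftQ (φ - G) hkerB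
    have hkerTB : Submodule.torsion R (P ⧸ B) ≤ LinearMap.ker G2 := by
      intro t ht
      obtain ⟨a, ha⟩ := (Submodule.mem_torsion_iff _).mp ht
      have h1 : (a : R) • G2 t = 0 := by
        rw [← map_smul, show (a : R) • t = a • t from rfl, ha, map_zero]
      rcases smul_eq_zero.mp h1 with h | h
      · exact absurd h (nonZeroDivisors.ne_zero a.2)
      · exact LinearMap.mem_ker.mpr h
    let β : MB →ₗ[R] R := (Submodule.torsion R (P ⧸ B)).liftQ G2 hkerTB
    refine ⟨α.comp (LinearMap.fst R MA MB) + β.comp (LinearMap.snd R MA MB), ?_⟩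
    intro x
    show α (ψA x) + β (ψB x) = φ x
    have h1 : α (ψA x) = G x := by
      show α ((Submodule.torsion R (P ⧸ A)).mkQ (A.mkQ x)) = G x
      rw [Submodule.mkQ_apply, Submodule.mkQ_apply, Submodule.liftQ_apply, Submodule.liftQ_apply]
    have h2 : β (ψB x) = φ x - G x := by
      show β ((Submodule.torsion R (P ⧸ B)).mkQ (B.mkQ x)) = φ x - G x
      rw [Submodule.mkQ_apply, Submodule.mkQ_apply, Submodule.liftQ_apply, Submodule.liftQ_apply]
      rfl
    rw [h1, h2]
    ring
  -- build a retraction r : MA × MB → P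
  choose Φs hΦs using fun k : Fin n => hW ((LinearMap.proj k).comp i)
  let r : (MA × MB) →ₗ[R] P := p.comp (LinearMap.pi Φs)
  have hr : ∀ x : P, r (ψ x) = x := by
    intro x
    show p (fun k => Φs k (ψ x)) = x
    have h1 : (fun k => Φs k (ψ x)) = i x := by
      funext k
      exact hΦs k x
    rw [h1]
    exact hpi x
  let Kk := LinearMap.ker r
  haveI : Module.Finite R (MA × MB) := by
    haveI h1 : Module.Finite R (P ⧸ A) := Module.Finite.of_surjective A.mkQ (Submodule.mkQ_surjective A)
    haveI h2 : Module.Finite R (P ⧸ B) := Module.Finite.of_surjective B.mkQ (Submodule.mkQ_surjective B)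
    haveI h3 : Module.Finite R MA := Module.Finite.of_surjective
      (Submodule.torsion R (P ⧸ A)).mkQ (Submodule.mkQ_surjective _)
    haveI h4 : Module.Finite R MB := Module.Finite.of_surjective
      (Submodule.torsion R (P ⧸ B)).mkQ (Submodule.mkQ_surjective _)
    infer_instance
  haveI : IsNoetherian R (MA × MB) := isNoetherian_of_isNoetherianRing_of_finite R _
  haveI : Module.Finite R Kk := Module.Finite.iff_fg.mpr (IsNoetherian.noetherian Kk)
  haveI : NoZeroSMulDivisors R (MA × MB) := by
    haveI h1 : NoZeroSMulDivisors R MA := ⟨fun {r x} h => by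
      by_cases hr : r = 0
      · exact Or.inl hr
      · right
        have hx : x ∈ Submodule.torsion R MA :=
          (Submodule.mem_torsion_iff x).mpr ⟨⟨r, mem_nonZeroDivisors_of_ne_zero hr⟩, h⟩
        rwa [Submodule.QuotientTorsion.torsion_eq_bot, Submodule.mem_bot] at hx⟩
    haveI h2 : NoZeroSMulDivisors R MB := ⟨fun {r x} h => by
      by_cases hr : r = 0
      · exact Or.inl hr
      · right
        have hx : x ∈ Submodule.torsion R MB :=
          (Submodule.mem_torsion_iff x).mpr ⟨⟨r, mem_nonZeroDivisors_of_ne_zero hr⟩, h⟩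
        rwa [Submodule.QuotientTorsion.torsion_eq_bot, Submodule.mem_bot] at hx⟩
    exact ⟨fun {r x} h => by
      rcases NoZeroSMulDivisors.eq_zero_or_eq_zero_of_smul_eq_zero
          (show r • x.1 = 0 from congrArg Prod.fst h) with h3 | h3
      · exact Or.inl h3
      · rcases NoZeroSMulDivisors.eq_zero_or_eq_zero_of_smul_eq_zero
            (show r • x.2 = 0 from congrArg Prod.snd h) with h4 | h4
        · exact Or.inl h4
        · exact Or.inr (Prod.ext h3 h4)⟩
  haveI : NoZeroSMulDivisors R Kk :=
    Function.Injective.noZeroSMulDivisors Kk.subtype (Submodule.injective_subtype Kk)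
      (map_zero _) (fun c x => map_smul _ c x)
  have hmemK : ∀ q : MA × MB, q - ψ (r q) ∈ Kk := by
    intro q
    show r (q - ψ (r q)) = 0
    rw [map_sub, hr (r q), sub_self]
  have hKdual : ∀ f0 : Kk →ₗ[R] R, f0 = 0 := by
    intro f0
    let pr : (MA × MB) →ₗ[R] Kk :=
      LinearMap.codRestrict Kk (LinearMap.id - ψ.comp r) hmemK
    let χ : (MA × MB) →ₗ[R] R := f0.comp pr
    have hχψ : ∀ x : P, χ (ψ x) = 0 := by
      intro x
      show f0 (pr (ψ x)) = 0
      have h1 : pr (ψ x) = 0 := by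
        apply Subtype.ext
        show ψ x - ψ (r (ψ x)) = 0
        rw [hr x, sub_self]
      rw [h1, map_zero]
    let ξ : P →ₗ[R] R := χ.comp ((LinearMap.inl R MA MB).comp ψA)
    have hξW : (A ⊔ B) ≤ LinearMap.ker ξ := by
      apply sup_le
      · intro a ha
        rw [LinearMap.mem_ker]
        show χ (ψA a, 0) = 0
        have h1 : ψA a = 0 := by
          show (Submodule.torsion R (P ⧸ A)).mkQ (A.mkQ a) = 0
          rw [show A.mkQ a = 0 by rw [Submodule.mkQ_apply, Submodule.Quotient.mk_eq_zero]; exact ha,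
            map_zero]
        rw [h1]
        exact map_zero χ
      · intro b hb
        rw [LinearMap.mem_ker]
        show χ (ψA b, 0) = 0
        have h1 : ψB b = 0 := by
          show (Submodule.torsion R (P ⧸ B)).mkQ (B.mkQ b) = 0
          rw [show B.mkQ b = 0 by rw [Submodule.mkQ_apply, Submodule.Quotient.mk_eq_zero]; exact hb,
            map_zero]
        have h2 : ((ψA b, (0 : MB)) : MA × MB) = ψ b := by
          show _ = (ψA b, ψB b)
          rw [h1]
        rw [h2]
        exact hχψ b
    let ξq : (P ⧸ (A ⊔ B)) →ₗ[R] R := (A ⊔ B).liftQ ξ hξW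
    have hξq : ξq = 0 := hhom ξq
    have hξ0 : ∀ x : P, ξ x = 0 := by
      intro x
      have h1 : ξ x = ξq ((A ⊔ B).mkQ x) := by
        rw [Submodule.mkQ_apply, Submodule.liftQ_apply]
      rw [h1, hξq]
      rfl
    have hl : ∀ m : MA, χ (m, 0) = 0 := by
      intro m
      obtain ⟨x, rfl⟩ := hψAsurj m
      exact hξ0 x
    have hr2 : ∀ m : MB, χ (0, m) = 0 := by
      intro m
      obtain ⟨x, rfl⟩ := hψBsurj m
      have h1 : ((0 : MA), ψB x) = ψ x - (ψA x, 0) := by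
        show _ = ((ψA x, ψB x) : MA × MB) - _
        rw [Prod.mk_sub_mk, sub_self, sub_zero]
      rw [h1, map_sub, hχψ x, hl (ψA x), sub_zero]
    ext k
    have hk : pr (k : MA × MB) = k := by
      apply Subtype.ext
      show (k : MA × MB) - ψ (r (k : MA × MB)) = (k : MA × MB)
      rw [show r (k : MA × MB) = 0 from k.2, map_zero, sub_zero]
    have h1 : χ (k : MA × MB) = f0 k := by
      show f0 (pr (k : MA × MB)) = f0 k
      rw [hk]
    have h2 : ((k : MA × MB)) = ((k : MA × MB).1, (0 : MB)) + ((0 : MA), (k : MA × MB).2) := by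
      rw [Prod.mk_add_mk, add_zero, zero_add]
    rw [LinearMap.zero_apply, ← h1, h2, map_add, hl, hr2, add_zero]
  haveI hKsub : Subsingleton Kk := aux_subsingleton_of_dual_zero hKdual
  have hψsurj : Function.Surjective ψ := by
    intro q
    refine ⟨r q, ?_⟩
    have h1 : (⟨q - ψ (r q), hmemK q⟩ : Kk) = ⟨0, Kk.zero_mem⟩ := Subsingleton.elim _ _
    have h2 : q - ψ (r q) = 0 := congrArg Subtype.val h1
    rw [sub_eq_zero] at h2
    exact h2.symm
  let eψ : P ≃ₗ[R] (MA × MB) := LinearEquiv.ofBijective ψ ⟨hψinj, hψsurj⟩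
  haveI : Module.Projective R (MA × MB) := Module.Projective.of_equiv eψ
  exact Module.Projective.of_split (LinearMap.inl R MA MB) (LinearMap.fst R MA MB)
    (by ext x; rfl)
end

section
/- Let R be a ring and P a module with submodules A, B such that A ∩ B = 0, and set T = P/(A+B). Assume Ext¹(T, P) = 0. Then the short exact sequence 0 → A → P/B → T → 0 splits if and only if Ext¹(T, A) = 0. -/
open CategoryTheory Opposite

/-- If `Ext¹(X/M, N) = 0`, every map `M → N` extends to `X`. -/
lemma extend_of_subsingleton_ext1
    (R : Type) [Ring R] (X N : Type) [AddCommGroup X] [Module R X]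
    [AddCommGroup N] [Module R N] (M : Submodule R X)
    (hext : Subsingleton (Ext1 R (X ⧸ M) N))
    (g : M →ₗ[R] N) : ∃ g' : X →ₗ[R] N, ∀ m : M, g' m = g m := by
  classical
  let T : ModuleCat R := ModuleCat.of R (X ⧸ M)
  let Nc : ModuleCat R := ModuleCat.of R N
  let PR : ProjectiveResolution T := ProjectiveResolution.of T
  let K := PR.complex.linearYonedaObj ℤ Nc
  have hKd12 : ∀ ψ : PR.complex.X 1 ⟶ Nc, K.d 1 2 ψ = PR.complex.d 2 1 ≫ ψ := by
    intro ψ; simp [K, ChainComplex.linearYonedaObj]; rfl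
  have hKd01 : ∀ ψ : PR.complex.X 0 ⟶ Nc, K.d 0 1 ψ = PR.complex.d 1 0 ≫ ψ := by
    intro ψ; simp [K, ChainComplex.linearYonedaObj]; rfl
  -- translate the Ext hypothesis into exactness
  have h1 : Limits.IsZero (((Ext ℤ (ModuleCat R) 1).obj (op T)).obj Nc) :=
    ModuleCat.isZero_of_subsingleton _
  have h2 : Limits.IsZero (K.homology 1) := h1.of_iso (PR.isoExt 1 Nc).symm
  have h3 : K.ExactAt 1 := (HomologicalComplex.exactAt_iff_isZero_homology _ _).2 h2
  rw [HomologicalComplex.exactAt_iff' _ 0 1 2 (by simp) (by simp)] at h3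
  rw [ShortComplex.moduleCat_exact_iff] at h3
  -- the quotient map and the comparison map f₀
  let p : ModuleCat.of R X ⟶ T := ModuleCat.ofHom M.mkQ
  haveI hpe : Epi p := (ModuleCat.epi_iff_surjective _).2 (Submodule.mkQ_surjective M)
  let e : ((ChainComplex.single₀ (ModuleCat R)).obj T).X 0 ≅ T :=
    HomologicalComplex.singleObjXSelf (ComplexShape.down ℕ) 0 T
  let f₀ : PR.complex.X 0 ⟶ ModuleCat.of R X :=
    Projective.factorThru (PR.π.f 0 ≫ e.hom) p
  have hf₀ : f₀ ≫ p = PR.π.f 0 ≫ e.hom := Projective.factorThru_comp _ _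
  let f₀l : ↑(PR.complex.X 0) →ₗ[R] X := f₀.hom
  have hf₀l : ∀ y, M.mkQ (f₀l y) = e.hom (PR.π.f 0 y) :=
    fun y => congrArg (fun (ψ : PR.complex.X 0 ⟶ T) => ψ y) hf₀
  -- exactness of the resolution at degree 0, elementwise
  have hex0 : ∀ y : PR.complex.X 0, PR.π.f 0 y = 0 →
      ∃ w : PR.complex.X 1, PR.complex.d 1 0 w = y := by
    have := (ShortComplex.moduleCat_exact_iff _).1 PR.exact₀
    intro y hy
    exact this y hy
  -- f₁ : P₁ → M
  let d10l : ↑(PR.complex.X 1) →ₗ[R] X := (PR.complex.d 1 0 ≫ f₀ : PR.complex.X 1 ⟶ ModuleCat.of R X).hom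
  have hd10l : ∀ w, d10l w = f₀l (PR.complex.d 1 0 w) := fun _ => rfl
  have hd10 : ∀ w : PR.complex.X 1, d10l w ∈ M := by
    intro w
    rw [← Submodule.Quotient.mk_eq_zero, ← Submodule.mkQ_apply, hd10l, hf₀l]
    have : (PR.complex.d 1 0 ≫ PR.π.f 0) w = 0 := by
      rw [PR.complex_d_comp_π_f_zero]; rfl
    rw [show PR.π.f 0 (PR.complex.d 1 0 w) = 0 from this, map_zero]
  let f₁ : ↑(PR.complex.X 1) →ₗ[R] ↥M := LinearMap.codRestrict M d10l hd10
  have hf₁ : ∀ w, (f₁ w : X) = f₀l (PR.complex.d 1 0 w) := fun _ => rfl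
  -- the 1-cocycle g ∘ f₁ is a coboundary
  let φ : PR.complex.X 1 ⟶ Nc := ModuleCat.ofHom (g.comp f₁ : ↑(PR.complex.X 1) →ₗ[R] N)
  have hφ : K.d 1 2 φ = 0 := by
    rw [hKd12]
    apply ModuleCat.hom_ext; apply LinearMap.ext
    intro w
    have h0 : f₁ (PR.complex.d 2 1 w) = 0 := by
      apply Subtype.ext
      rw [hf₁]
      have : PR.complex.d 2 1 ≫ PR.complex.d 1 0 = 0 := HomologicalComplex.d_comp_d _ _ _ _
      have h2 : PR.complex.d 1 0 (PR.complex.d 2 1 w) = 0 :=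
        congrArg (fun (ψ : PR.complex.X 2 ⟶ PR.complex.X 0) => ψ w) this
      rw [h2, map_zero]
      rfl
    show g (f₁ (PR.complex.d 2 1 w)) = 0
    rw [h0, map_zero]
  obtain ⟨h0, hh0⟩ := h3 φ hφ
  let h : PR.complex.X 0 ⟶ Nc := h0
  have hh : K.d 0 1 h = φ := hh0
  rw [hKd01] at hh
  let hl : ↑(PR.complex.X 0) →ₗ[R] N := h.hom
  have hhd : ∀ w : PR.complex.X 1, hl (PR.complex.d 1 0 w) = g (f₁ w) :=
    fun w => congrArg (fun (ψ : PR.complex.X 1 ⟶ Nc) => ψ w) hh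
  -- the surjection σ : P₀ × M → X and the map θ : P₀ × M → N
  let σ : (↑(PR.complex.X 0) × ↥M) →ₗ[R] X :=
    f₀l.comp (LinearMap.fst R _ _) + M.subtype.comp (LinearMap.snd R _ _)
  let θ : (↑(PR.complex.X 0) × ↥M) →ₗ[R] N :=
    hl.comp (LinearMap.fst R _ _) + g.comp (LinearMap.snd R _ _)
  have hσapp : ∀ z, σ z = f₀l z.1 + (z.2 : X) := fun _ => rfl
  have hθapp : ∀ z, θ z = hl z.1 + g z.2 := fun _ => rfl
  have hσ : Function.Surjective σ := by
    intro x
    have hsur : Function.Surjective (PR.π.f 0) := by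
      exact (ModuleCat.epi_iff_surjective _).1 inferInstance
    obtain ⟨y, hy⟩ := hsur (e.inv (M.mkQ x))
    have hy' : M.mkQ (f₀l y) = M.mkQ x := by
      rw [hf₀l, hy]
      exact congrArg (fun (ψ : T ⟶ T) => ψ (M.mkQ x)) e.inv_hom_id
    have hmem : x - f₀l y ∈ M := by
      rw [← Submodule.Quotient.mk_eq_zero, ← Submodule.mkQ_apply, map_sub, hy', sub_self]
    refine ⟨(y, ⟨x - f₀l y, hmem⟩), ?_⟩
    rw [hσapp]
    exact add_sub_cancel _ x
  have hker : ∀ z, σ z = 0 → θ z = 0 := by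
    rintro ⟨y, m⟩ hz
    rw [hσapp] at hz
    have hπ : PR.π.f 0 y = 0 := by
      have h1 : M.mkQ (f₀l y) = 0 := by
        have hz' : f₀l y = -(m : X) := eq_neg_of_add_eq_zero_left hz
        rw [hz', map_neg, Submodule.mkQ_apply, (Submodule.Quotient.mk_eq_zero M).2 m.2, neg_zero]
      have h2 : e.hom (PR.π.f 0 y) = 0 := by rw [← hf₀l]; exact h1
      have h4 : e.inv (e.hom (PR.π.f 0 y)) = PR.π.f 0 y :=
        congrArg (fun (ψ : ((ChainComplex.single₀ (ModuleCat R)).obj T).X 0 ⟶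
          ((ChainComplex.single₀ (ModuleCat R)).obj T).X 0) => ψ (PR.π.f 0 y)) e.hom_inv_id
      rw [← h4, h2, map_zero]
    obtain ⟨w, hw⟩ := hex0 y hπ
    have hm : f₁ w + m = 0 := by
      apply Subtype.ext
      show (f₁ w : X) + (m : X) = 0
      rw [hf₁, hw]
      exact hz
    rw [hθapp]
    show hl y + g m = 0
    rw [← hw, hhd w, ← map_add, hm, map_zero]
  -- descend θ along σ
  have hle : LinearMap.ker σ ≤ LinearMap.ker θ := fun z hz => hker z hz
  let q := LinearMap.quotKerEquivOfSurjective σ hσ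
  let g' : X →ₗ[R] N := (LinearMap.ker σ).liftQ θ hle ∘ₗ (q.symm : X →ₗ[R] _)
  have hg' : ∀ z, g' (σ z) = θ z := by
    intro z
    have hq : q (Submodule.Quotient.mk z) = σ z := rfl
    have : q.symm (σ z) = Submodule.Quotient.mk z := by rw [← hq, LinearEquiv.symm_apply_apply]
    show (LinearMap.ker σ).liftQ θ hle (q.symm (σ z)) = θ z
    rw [this]
    rfl
  refine ⟨g', fun m => ?_⟩
  have : σ (0, m) = (m : X) := by rw [hσapp]; simp
  rw [← this, hg', hθapp]
  simp

theorem converse_of_key_lemma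
    (R : Type) [Ring R] (P : Type) [AddCommGroup P] [Module R P]
    (A B : Submodule R P) (hAB : A ⊓ B = ⊥)
    (hextP : Subsingleton (Ext1 R (P ⧸ (A ⊔ B)) P)) :
    (∃ r : (P ⧸ B) →ₗ[R] A, r ∘ₗ (B.mkQ ∘ₗ A.subtype) = LinearMap.id) ↔
      Subsingleton (Ext1 R (P ⧸ (A ⊔ B)) A) := by
  constructor
  · rintro ⟨r, hr⟩
    let F := (Ext ℤ (ModuleCat R) 1).obj (op (ModuleCat.of R (P ⧸ (A ⊔ B))))
    let i : ModuleCat.of R ↥A ⟶ ModuleCat.of R P := ModuleCat.ofHom A.subtype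
    let s : ModuleCat.of R P ⟶ ModuleCat.of R ↥A := ModuleCat.ofHom (r ∘ₗ B.mkQ)
    have hsi : i ≫ s = 𝟙 (ModuleCat.of R ↥A) := by
      apply ModuleCat.hom_ext; apply LinearMap.ext
      intro a
      exact LinearMap.congr_fun hr a
    have h1 : F.map i ≫ F.map s = 𝟙 _ := by rw [← F.map_comp, hsi, F.map_id]
    constructor
    intro x y
    have hx : F.map s (F.map i x) = x :=
      congrArg (fun (ψ : F.obj (ModuleCat.of R ↥A) ⟶ F.obj (ModuleCat.of R ↥A)) => ψ x) h1
    have hy : F.map s (F.map i y) = y :=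
      congrArg (fun (ψ : F.obj (ModuleCat.of R ↥A) ⟶ F.obj (ModuleCat.of R ↥A)) => ψ y) h1
    rw [← hx, ← hy, Subsingleton.elim (F.map i x) (F.map i y)]
  · intro hext
    -- the projection `A ⊔ B → A` killing `B`
    let Ψ : (↥A × ↥B) →ₗ[R] P :=
      A.subtype.comp (LinearMap.fst R _ _) + B.subtype.comp (LinearMap.snd R _ _)
    have hΨapp : ∀ z, Ψ z = (z.1 : P) + (z.2 : P) := fun _ => rfl
    have hΨmem : ∀ z, Ψ z ∈ A ⊔ B := fun z => Submodule.add_mem_sup z.1.2 z.2.2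
    let Φ : (↥A × ↥B) →ₗ[R] ↥(A ⊔ B) := LinearMap.codRestrict _ Ψ hΨmem
    have hbij : Function.Bijective Φ := by
      constructor
      · intro z w hzw
        have h1 : (z.1 : P) + z.2 = (w.1 : P) + w.2 := congrArg Subtype.val hzw
        have h2 : (z.1 : P) - w.1 = (w.2 : P) - z.2 := by
          rw [sub_eq_sub_iff_add_eq_add, h1, add_comm]
        have hmem : (z.1 : P) - w.1 ∈ A ⊓ B := by
          refine ⟨sub_mem z.1.2 w.1.2, ?_⟩
          rw [h2]
          exact sub_mem w.2.2 z.2.2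
        rw [hAB] at hmem
        have hz1 : (z.1 : P) = w.1 := by
          have := (Submodule.mem_bot R).1 hmem
          rwa [sub_eq_zero] at this
        have hz2 : (z.2 : P) = w.2 := by
          have h3 : (w.2 : P) - z.2 = 0 := by
            rw [← h2, hz1, sub_self]
          rw [sub_eq_zero] at h3
          exact h3.symm
        exact Prod.ext (Subtype.ext hz1) (Subtype.ext hz2)
      · rintro ⟨x, hx⟩
        obtain ⟨a, ha, b, hb, hab⟩ := Submodule.mem_sup.1 hx
        exact ⟨(⟨a, ha⟩, ⟨b, hb⟩), Subtype.ext hab⟩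
    let q := LinearEquiv.ofBijective Φ hbij
    let g : ↥(A ⊔ B) →ₗ[R] ↥A := (LinearMap.fst R ↥A ↥B) ∘ₗ (q.symm : ↥(A ⊔ B) →ₗ[R] _)
    have hgq : ∀ z : ↥A × ↥B, g (q z) = z.1 := by
      intro z
      show (LinearMap.fst R ↥A ↥B) (q.symm (q z)) = z.1
      rw [LinearEquiv.symm_apply_apply]
      rfl
    have hgA : ∀ (a : ↥A) (h : (a : P) ∈ A ⊔ B), g ⟨(a : P), h⟩ = a := by
      intro a h
      have hq : q ((a, 0) : ↥A × ↥B) = ⟨(a : P), h⟩ := by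
        apply Subtype.ext
        show Ψ ((a, 0) : ↥A × ↥B) = (a : P)
        rw [hΨapp]
        simp
      rw [← hq, hgq]
    have hgB : ∀ (b : ↥B) (h : (b : P) ∈ A ⊔ B), g ⟨(b : P), h⟩ = 0 := by
      intro b h
      have hq : q ((0, b) : ↥A × ↥B) = ⟨(b : P), h⟩ := by
        apply Subtype.ext
        show Ψ ((0, b) : ↥A × ↥B) = (b : P)
        rw [hΨapp]
        simp
      rw [← hq, hgq]
    -- extend g to all of P
    obtain ⟨g', hg'⟩ := extend_of_subsingleton_ext1 R P ↥A (A ⊔ B) hext g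
    have hBker : B ≤ LinearMap.ker g' := by
      intro b hb
      rw [LinearMap.mem_ker]
      have := hg' ⟨b, Submodule.mem_sup_right hb⟩
      rw [this, hgB ⟨b, hb⟩ (Submodule.mem_sup_right hb)]
    refine ⟨B.liftQ g' hBker, ?_⟩
    apply LinearMap.ext
    intro a
    show (B.liftQ g' hBker) (B.mkQ (A.subtype a)) = a
    rw [Submodule.mkQ_apply, Submodule.liftQ_apply]
    exact (hg' ⟨(a : P), Submodule.mem_sup_left a.2⟩).trans (hgA a (Submodule.mem_sup_left a.2))
end
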